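/- Let $T \ge 2\sqrt 2$, let $t_0$ satisfy $\sqrt 2 \le t_0 \le T - \sqrt 2$, let $f \in \mathcal{L}_2(T)$ and $t_1 \in \mathbb{R}$. If $f(t_0) = q(t_1)$ then $|f'(t_0)| \le |q'(t_1)|$. -/

import Mathlib

open Set Real Filter Topology

/-- Membership in Landau's class `𝓛₂(T)`. -/
def InL2 (T : ℝ) (f f' : ℝ → ℝ) : Prop :=
  (∀ t ∈ Icc 0 T, HasDerivWithinAt f (f' t) (Icc 0 T) t) ∧
  (∀ t ∈ Icc 0 T, |f t| ≤ 1) ∧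
  LipschitzOnWith 1 f' (Icc 0 T)

lemma mono_core {f f' : ℝ → ℝ} {a b : ℝ} (hab : a ≤ b)
    (hc : ContinuousOn f (Icc a b))
    (hd : ∀ x ∈ Ioo a b, HasDerivWithinAt f (f' x) (Ioo a b) x)
    (h0 : ∀ x ∈ Ioo a b, 0 ≤ f' x) : f a ≤ f b := by
  have h := monotoneOn_of_hasDerivWithinAt_nonneg (convex_Icc a b) hc
    (by simpa [interior_Icc] using hd) (by simpa [interior_Icc] using h0)
  exact h (left_mem_Icc.2 hab) (right_mem_Icc.2 hab) hab

lemma anti_core {f f' : ℝ → ℝ} {a b : ℝ} (hab : a ≤ b)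
    (hc : ContinuousOn f (Icc a b))
    (hd : ∀ x ∈ Ioo a b, HasDerivWithinAt f (f' x) (Ioo a b) x)
    (h0 : ∀ x ∈ Ioo a b, f' x ≤ 0) : f b ≤ f a := by
  have h := antitoneOn_of_hasDerivWithinAt_nonpos (convex_Icc a b) hc
    (by simpa [interior_Icc] using hd) (by simpa [interior_Icc] using h0)
  exact h (left_mem_Icc.2 hab) (right_mem_Icc.2 hab) hab

lemma taylor_bound (f f' : ℝ → ℝ) (T : ℝ)
    (hderiv : ∀ t ∈ Icc 0 T, HasDerivWithinAt f (f' t) (Icc 0 T) t)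
    (hlip : LipschitzOnWith 1 f' (Icc 0 T))
    {t₀ u : ℝ} (ht₀ : t₀ ∈ Icc 0 T) (hu : u ∈ Icc 0 T) :
    |f u - f t₀ - f' t₀ * (u - t₀)| ≤ (u - t₀) ^ 2 / 2 := by
  set a := f' t₀ with ha
  have hlip' : ∀ x ∈ Icc 0 T, |f' x - a| ≤ |x - t₀| := by
    intro x hx
    have := hlip.dist_le_mul x hx t₀ ht₀
    simpa [Real.dist_eq] using this
  set φ : ℝ → ℝ := fun u => f u - a * (u - t₀) + (u - t₀) ^ 2 / 2 with hφ
  set ψ : ℝ → ℝ := fun u => f u - a * (u - t₀) - (u - t₀) ^ 2 / 2 with hψ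
  have hpoly1 : ∀ x : ℝ, HasDerivAt (fun u : ℝ => a * (u - t₀)) a x := by
    intro x
    simpa using ((hasDerivAt_id x).sub_const t₀).const_mul a
  have hpoly2 : ∀ x : ℝ, HasDerivAt (fun u : ℝ => (u - t₀) ^ 2 / 2) (x - t₀) x := by
    intro x
    have h : HasDerivAt (fun u : ℝ => (u - t₀) ^ 2 / 2) (((2:ℕ):ℝ) * (x - t₀) ^ (2 - 1) * 1 / 2) x :=
      (((hasDerivAt_id x).sub_const t₀).pow 2).div_const 2
    convert h using 1
    norm_num
  have hφd : ∀ x ∈ Icc 0 T, HasDerivWithinAt φ (f' x - a + (x - t₀)) (Icc 0 T) x :=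
    fun x hx => ((hderiv x hx).sub (hpoly1 x).hasDerivWithinAt).add (hpoly2 x).hasDerivWithinAt
  have hψd : ∀ x ∈ Icc 0 T, HasDerivWithinAt ψ (f' x - a - (x - t₀)) (Icc 0 T) x :=
    fun x hx => ((hderiv x hx).sub (hpoly1 x).hasDerivWithinAt).sub (hpoly2 x).hasDerivWithinAt
  have hφc : ContinuousOn φ (Icc 0 T) := fun t ht => (hφd t ht).continuousWithinAt
  have hψc : ContinuousOn ψ (Icc 0 T) := fun t ht => (hψd t ht).continuousWithinAt
  have key : φ t₀ ≤ φ u ∧ ψ u ≤ ψ t₀ := by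
    rcases le_total t₀ u with hle | hle
    · have hsub : Icc t₀ u ⊆ Icc 0 T := Icc_subset_Icc ht₀.1 hu.2
      have hsub' : Ioo t₀ u ⊆ Icc 0 T := Ioo_subset_Icc_self.trans hsub
      constructor
      · refine mono_core (f' := fun x => f' x - a + (x - t₀)) hle (hφc.mono hsub)
          (fun x hx => (hφd x (hsub' hx)).mono hsub') ?_
        intro x hx
        show 0 ≤ f' x - a + (x - t₀)
        have h1 := abs_le.1 ((hlip' x (hsub' hx)).trans_eq
          (abs_of_nonneg (by linarith [hx.1] : (0:ℝ) ≤ x - t₀)))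
        linarith [h1.1]
      · refine anti_core (f' := fun x => f' x - a - (x - t₀)) hle (hψc.mono hsub)
          (fun x hx => (hψd x (hsub' hx)).mono hsub') ?_
        intro x hx
        show f' x - a - (x - t₀) ≤ 0
        have h1 := abs_le.1 ((hlip' x (hsub' hx)).trans_eq
          (abs_of_nonneg (by linarith [hx.1] : (0:ℝ) ≤ x - t₀)))
        linarith [h1.2]
    · have hsub : Icc u t₀ ⊆ Icc 0 T := Icc_subset_Icc hu.1 ht₀.2
      have hsub' : Ioo u t₀ ⊆ Icc 0 T := Ioo_subset_Icc_self.trans hsub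
      constructor
      · refine anti_core (f' := fun x => f' x - a + (x - t₀)) hle (hφc.mono hsub)
          (fun x hx => (hφd x (hsub' hx)).mono hsub') ?_
        intro x hx
        show f' x - a + (x - t₀) ≤ 0
        have h1 := abs_le.1 ((hlip' x (hsub' hx)).trans_eq
          (abs_of_nonpos (by linarith [hx.2] : x - t₀ ≤ (0:ℝ))))
        linarith [h1.2]
      · refine mono_core (f' := fun x => f' x - a - (x - t₀)) hle (hψc.mono hsub)
          (fun x hx => (hψd x (hsub' hx)).mono hsub') ?_
        intro x hx
        show 0 ≤ f' x - a - (x - t₀)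
        have h1 := abs_le.1 ((hlip' x (hsub' hx)).trans_eq
          (abs_of_nonpos (by linarith [hx.2] : x - t₀ ≤ (0:ℝ))))
        linarith [h1.1]
  have h1 : f t₀ ≤ f u - a * (u - t₀) + (u - t₀) ^ 2 / 2 := by
    have := key.1; simp only [hφ] at this; linarith [this]
  have h2 : f u - a * (u - t₀) - (u - t₀) ^ 2 / 2 ≤ f t₀ := by
    have := key.2; simp only [hψ] at this; linarith [this]
  rw [abs_le]; constructor <;> linarith

/-- **Comparison property of `q`.** Let `T ≥ 2√2`, `√2 ≤ t₀ ≤ T - √2`,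
`f ∈ 𝓛₂(T)` and `t₁ ∈ ℝ`. If `f(t₀) = q(t₁)` then `|f'(t₀)| ≤ |q'(t₁)|`,
where `q` is the `4√2`-periodic comparison function with `q(t) = 1 - t²/2`
for `|t| ≤ √2` and `q(t + 2√2) = -q(t)`. -/
theorem comparison_property (q : ℝ → ℝ)
    (hper : Function.Periodic q (4 * Real.sqrt 2))
    (hval : ∀ t : ℝ, |t| ≤ Real.sqrt 2 → q t = 1 - t ^ 2 / 2)
    (hanti : ∀ t : ℝ, q (t + 2 * Real.sqrt 2) = -q t)
    (T t₀ : ℝ) (hT : 2 * Real.sqrt 2 ≤ T)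
    (ht₀ : Real.sqrt 2 ≤ t₀) (ht₀' : t₀ ≤ T - Real.sqrt 2)
    (f f' : ℝ → ℝ) (hf : InL2 T f f') (t₁ : ℝ) (heq : f t₀ = q t₁) :
    |f' t₀| ≤ |deriv q t₁| := by
  have hr2 : Real.sqrt 2 ^ 2 = 2 := Real.sq_sqrt (by norm_num)
  set r := Real.sqrt 2 with hrdef
  have hrpos : (0:ℝ) < r := Real.sqrt_pos.2 (by norm_num)
  have hr1 : (1:ℝ) < r := by nlinarith
  -- formulas for q on adjacent pieces
  have F2 : ∀ t : ℝ, r ≤ t → t ≤ 3*r → q t = (t - 2*r)^2/2 - 1 := by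
    intro t h1 h2
    have habs : |t - 2*r| ≤ r := abs_le.2 ⟨by linarith, by linarith⟩
    have h := hanti (t - 2*r)
    have ht : t - 2*r + 2*r = t := by ring
    rw [ht] at h
    rw [h, hval _ habs]; ring
  have F3 : ∀ t : ℝ, -(3*r) ≤ t → t ≤ -r → q t = (t + 2*r)^2/2 - 1 := by
    intro t h1 h2
    have habs : |t + 2*r| ≤ r := abs_le.2 ⟨by linarith, by linarith⟩
    have h := hanti t
    rw [hval _ habs] at h
    linarith
  -- polynomial derivatives
  have P1 : ∀ x : ℝ, HasDerivAt (fun u : ℝ => 1 - u^2/2) (-x) x := by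
    intro x
    have h : HasDerivAt (fun u : ℝ => 1 - u^2/2) (-(((2:ℕ):ℝ) * x ^ (2 - 1) / 2)) x :=
      ((hasDerivAt_pow 2 x).div_const 2).const_sub 1
    convert h using 1
    norm_num
  have P2 : ∀ x : ℝ, HasDerivAt (fun u : ℝ => (u - 2*r)^2/2 - 1) (x - 2*r) x := by
    intro x
    have h : HasDerivAt (fun u : ℝ => (u - 2*r)^2/2 - 1) (((2:ℕ):ℝ) * (x - 2*r) ^ (2 - 1) * 1 / 2) x :=
      ((((hasDerivAt_id x).sub_const (2*r)).pow 2).div_const 2).sub_const 1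
    convert h using 1
    norm_num
  have P3 : ∀ x : ℝ, HasDerivAt (fun u : ℝ => (u + 2*r)^2/2 - 1) (x + 2*r) x := by
    intro x
    have h : HasDerivAt (fun u : ℝ => (u + 2*r)^2/2 - 1) (((2:ℕ):ℝ) * (x + 2*r) ^ (2 - 1) * 1 / 2) x :=
      ((((hasDerivAt_id x).add_const (2*r)).pow 2).div_const 2).sub_const 1
    convert h using 1
    norm_num
  have q0 : q r = 1 - r^2/2 := hval r (by rw [abs_of_nonneg hrpos.le])
  -- derivative of q with the key identity, on a fundamental domain
  have HD : ∀ t : ℝ, -(2*r) ≤ t → t < 2*r →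
      ∃ d : ℝ, HasDerivAt q d t ∧ d^2 = 2*(1 - |q t|) := by
    intro t h1 h2
    rcases lt_trichotomy t (-r) with hc | hc | hc
    · -- left piece
      refine ⟨t + 2*r, ?_, ?_⟩
      · refine (P3 t).congr_of_eventuallyEq ?_
        have hnb : Ioo (-(3*r)) (-r) ∈ 𝓝 t := isOpen_Ioo.mem_nhds ⟨by linarith, hc⟩
        filter_upwards [hnb] with x hx
        exact F3 x hx.1.le hx.2.le
      · have hq : q t = (t + 2*r)^2/2 - 1 := F3 t (by linarith) hc.le
        have hb : (t + 2*r)^2 ≤ 2 := by nlinarith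
        have : |q t| = 1 - (t + 2*r)^2/2 := by
          rw [hq, abs_of_nonpos (by nlinarith)]; ring
        rw [this]; ring
    · -- gluing point t = -r
      subst hc
      refine ⟨-(-r), ?_, ?_⟩
      · have hL : HasDerivWithinAt q (-(-r)) (Iic (-r)) (-r) := by
          have hp : HasDerivWithinAt (fun u : ℝ => (u + 2*r)^2/2 - 1) (-r + 2*r) (Iic (-r)) (-r) :=
            (P3 (-r)).hasDerivWithinAt
          have hv : -r + 2*r = -(-r) := by ring
          rw [hv] at hp
          refine hp.congr_of_eventuallyEq ?_ ?_
          · have hnb : Ioi (-(3*r)) ∈ 𝓝 (-r) := Ioi_mem_nhds (by linarith)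
            filter_upwards [self_mem_nhdsWithin, mem_nhdsWithin_of_mem_nhds hnb] with x hx1 hx2
            exact F3 x hx2.le hx1
          · exact F3 (-r) (by linarith) le_rfl
        have hR : HasDerivWithinAt q (-(-r)) (Ici (-r)) (-r) := by
          have hp : HasDerivWithinAt (fun u : ℝ => 1 - u^2/2) (-(-r)) (Ici (-r)) (-r) :=
            (P1 (-r)).hasDerivWithinAt
          refine hp.congr_of_eventuallyEq ?_ ?_
          · have hnb : Iio r ∈ 𝓝 (-r) := Iio_mem_nhds (by linarith)
            filter_upwards [self_mem_nhdsWithin, mem_nhdsWithin_of_mem_nhds hnb] with x hx1 hx2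
            exact hval x (abs_le.2 ⟨hx1, hx2.le⟩)
          · exact hval (-r) (by rw [abs_of_nonpos (by linarith)]; linarith)
        have h := hL.union hR
        rw [Iic_union_Ici] at h
        exact hasDerivWithinAt_univ.1 h
      · have hq : q (-r) = 1 - (-r)^2/2 := hval (-r) (by rw [abs_of_nonpos (by linarith)]; linarith)
        have : |q (-r)| = 1 - (-r)^2/2 := by
          rw [hq, abs_of_nonneg (by nlinarith)]
        rw [this]; ring
    · rcases lt_trichotomy t r with hc2 | hc2 | hc2
      · -- middle piece
        refine ⟨-t, ?_, ?_⟩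
        · refine (P1 t).congr_of_eventuallyEq ?_
          have hnb : Ioo (-r) r ∈ 𝓝 t := isOpen_Ioo.mem_nhds ⟨hc, hc2⟩
          filter_upwards [hnb] with x hx
          exact hval x (abs_le.2 ⟨hx.1.le, hx.2.le⟩)
        · have hq : q t = 1 - t^2/2 := hval t (abs_le.2 ⟨hc.le, hc2.le⟩)
          have hb : t^2 ≤ 2 := by nlinarith
          have : |q t| = 1 - t^2/2 := by rw [hq, abs_of_nonneg (by nlinarith)]
          rw [this]; ring
      · -- gluing point t = r
        subst hc2
        refine ⟨-r, ?_, ?_⟩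
        · have hL : HasDerivWithinAt q (-r) (Iic r) r := by
            have hp : HasDerivWithinAt (fun u : ℝ => 1 - u^2/2) (-r) (Iic r) r :=
              (P1 r).hasDerivWithinAt
            refine hp.congr_of_eventuallyEq ?_ ?_
            · have hnb : Ioi (-r) ∈ 𝓝 r := Ioi_mem_nhds (by linarith)
              filter_upwards [self_mem_nhdsWithin, mem_nhdsWithin_of_mem_nhds hnb] with x hx1 hx2
              exact hval x (abs_le.2 ⟨hx2.le, hx1⟩)
            · exact q0
          have hR : HasDerivWithinAt q (-r) (Ici r) r := by
            have hp : HasDerivWithinAt (fun u : ℝ => (u - 2*r)^2/2 - 1) (r - 2*r) (Ici r) r :=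
              (P2 r).hasDerivWithinAt
            have hv : r - 2*r = -r := by ring
            rw [hv] at hp
            refine hp.congr_of_eventuallyEq ?_ ?_
            · have hnb : Iio (3*r) ∈ 𝓝 r := Iio_mem_nhds (by linarith)
              filter_upwards [self_mem_nhdsWithin, mem_nhdsWithin_of_mem_nhds hnb] with x hx1 hx2
              exact F2 x hx1 hx2.le
            · rw [q0]; linear_combination -hr2
          have h := hL.union hR
          rw [Iic_union_Ici] at h
          exact hasDerivWithinAt_univ.1 h
        · have : |q r| = 1 - r^2/2 := by rw [q0, abs_of_nonneg (by nlinarith)]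
          rw [this]; ring
      · -- right piece
        refine ⟨t - 2*r, ?_, ?_⟩
        · refine (P2 t).congr_of_eventuallyEq ?_
          have hnb : Ioo r (3*r) ∈ 𝓝 t := isOpen_Ioo.mem_nhds ⟨hc2, by linarith⟩
          filter_upwards [hnb] with x hx
          exact F2 x hx.1.le hx.2.le
        · have hq : q t = (t - 2*r)^2/2 - 1 := F2 t hc2.le (by linarith)
          have hb : (t - 2*r)^2 ≤ 2 := by nlinarith
          have : |q t| = 1 - (t - 2*r)^2/2 := by
            rw [hq, abs_of_nonpos (by nlinarith)]; ring
          rw [this]; ring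
  -- reduce t₁ modulo the period
  have hp4 : (0:ℝ) < 4*r := by linarith
  set n := toIcoDiv hp4 (-(2*r)) t₁ with hn
  set s := toIcoMod hp4 (-(2*r)) t₁ with hs
  have hmem : s ∈ Ico (-(2*r)) (-(2*r) + 4*r) := toIcoMod_mem_Ico hp4 _ t₁
  have hsub : t₁ - s = (n:ℝ) * (4*r) := by
    have h := self_sub_toIcoMod hp4 (-(2*r)) t₁
    rw [← hs, ← hn] at h
    rw [h, zsmul_eq_mul]
  have ht₁eq : t₁ = s + (n:ℝ)*(4*r) := by linarith
  have hper' : Function.Periodic q ((n:ℝ) * (4*r)) := hper.int_mul n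
  have hq_eq : q t₁ = q s := by rw [ht₁eq]; exact hper' s
  have hd_eq : deriv q t₁ = deriv q s := by
    have hfun : (fun x => q (x + (n:ℝ)*(4*r))) = q := funext hper'
    calc deriv q t₁ = deriv q (s + (n:ℝ)*(4*r)) := by rw [← ht₁eq]
      _ = deriv (fun x => q (x + (n:ℝ)*(4*r))) s := (deriv_comp_add_const q _ s).symm
      _ = deriv q s := by rw [hfun]
  obtain ⟨d, hd, hd2⟩ := HD s hmem.1 (by have := hmem.2; linarith)
  have hsq : (deriv q t₁)^2 = 2*(1 - |f t₀|) := by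
    rw [hd_eq, hd.deriv, hd2, heq, hq_eq]
  -- the Taylor estimates for f
  have hT0 : t₀ ∈ Icc 0 T := ⟨by linarith, by linarith⟩
  have hbound := hf.2.1
  have K : ∀ h : ℝ, 0 ≤ h → h ≤ r → |f' t₀| * h - h^2/2 ≤ 1 - |f t₀| := by
    intro h h0 h1
    have hu1 : t₀ + h ∈ Icc 0 T := ⟨by linarith, by linarith⟩
    have hu2 : t₀ - h ∈ Icc 0 T := ⟨by linarith, by linarith⟩
    have e1 : |f (t₀ + h) - f t₀ - f' t₀ * h| ≤ h^2/2 := by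
      have h' := taylor_bound f f' T hf.1 hf.2.2 hT0 hu1
      have hss : t₀ + h - t₀ = h := by ring
      rw [hss] at h'
      exact h'
    have e2 : |f (t₀ - h) - f t₀ + f' t₀ * h| ≤ h^2/2 := by
      have h' := taylor_bound f f' T hf.1 hf.2.2 hT0 hu2
      convert h' using 2 <;> ring
    have e1' := abs_le.1 e1
    have e2' := abs_le.1 e2
    have b1 := abs_le.1 (hbound _ hu1)
    have b2 := abs_le.1 (hbound _ hu2)
    rcases abs_cases (f' t₀) with ⟨ha, _⟩ | ⟨ha, _⟩ <;>
      rcases abs_cases (f t₀) with ⟨hcc, _⟩ | ⟨hcc, _⟩ <;> rw [ha, hcc] <;>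
      linarith [e1'.1, e1'.2, e2'.1, e2'.2, b1.1, b1.2, b2.1, b2.2]
  have hcle : (0:ℝ) ≤ |f t₀| := abs_nonneg _
  have haR : |f' t₀| ≤ r := by
    have hK := K r hrpos.le le_rfl
    nlinarith [abs_nonneg (f' t₀)]
  have hsqa : (f' t₀)^2 ≤ 2*(1 - |f t₀|) := by
    have hK := K |f' t₀| (abs_nonneg _) haR
    linarith [abs_mul_abs_self (f' t₀), sq_abs (f' t₀), pow_two (f' t₀)]
  calc |f' t₀| = Real.sqrt ((f' t₀)^2) := (Real.sqrt_sq_eq_abs _).symm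
    _ ≤ Real.sqrt ((deriv q t₁)^2) := Real.sqrt_le_sqrt (by rw [hsq]; exact hsqa)
    _ = |deriv q t₁| := Real.sqrt_sq_eq_abs _
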